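/- Let π = (Z, σ) ∈ (Z_{r_1} × ⋯ × Z_{r_k}) ≀ S_n, acting on the colored alphabet Σ = {i^v : i ∈ [n], v ∈ Z_{r_1}×⋯×Z_{r_k}} (with the color-respecting action). With the total order on Σ defined by i^v ≺ j^w iff (v ≠ w and v ≺ w) or (v = w and i < j), where v ≺ w iff the r_max-ary value of w is less than that of v, the total number of excedances #{x ∈ Σ : π(x) ≻ x} equals r·exc_A(π) + ∑_{p=1}^k csum_p(π)·∏_{q≠p} r_q, where r = r_1⋯r_k. -/

import Mathlib

open Finset Polynomial

/-- A color vector for the group `ℤ_{r 0} × ⋯ × ℤ_{r (k-1)}`. -/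
abbrev Color (k : ℕ) (r : Fin k → ℕ) := ∀ j : Fin k, ZMod (r j)

/-- An element of the wreath product `(ℤ_{r 0} × ⋯ × ℤ_{r (k-1)}) ≀ S_n`:
a color vector for each digit together with an underlying permutation. -/
abbrev GElt (k n : ℕ) (r : Fin k → ℕ) := (Fin n → Color k r) × Equiv.Perm (Fin n)

/-- `r = r_1 ⋯ r_k`. -/
def totR (k : ℕ) (r : Fin k → ℕ) : ℕ := ∏ j, r j

/-- `csum_p(π) = ∑_i z_i^p · ∏_{t<p} χ(z_i^t = 0)`, colors as representatives. -/
def csump {k n : ℕ} (r : Fin k → ℕ) (Z : Fin n → Color k r) (p : Fin k) : ℕ :=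
  ∑ i, (Z i p).val * ∏ t ∈ Finset.Iio p, if (Z i t).val = 0 then 1 else 0

/-- `csum(π) = ∑_p csum_p(π) · ∏_{q ≠ p} r_q`. -/
def csum {k n : ℕ} (r : Fin k → ℕ) (Z : Fin n → Color k r) : ℕ :=
  ∑ p, csump r Z p * ∏ q ∈ Finset.univ.erase p, r q

/-- `exc_A(π)`: number of `i` with zero color vector and `σ(i) > i`. -/
def excA {k n : ℕ} (r : Fin k → ℕ) (π : GElt k n r) : ℕ :=
  (Finset.univ.filter fun i => (∀ j, (π.1 i j).val = 0) ∧ i < π.2 i).card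

/-- `exc(π) = r·exc_A(π) + ∑_p csum_p(π)·∏_{q≠p} r_q`. -/
def exc {k n : ℕ} (r : Fin k → ℕ) (π : GElt k n r) : ℕ :=
  totR k r * excA r π + csum r π.1

/-- Number of cycles of a permutation, counting fixed points as 1-cycles. -/
def cyc {n : ℕ} (σ : Equiv.Perm (Fin n)) : ℕ :=
  (Finset.univ.filter fun i => σ i = i).card + σ.cycleType.card

/-- `K(q) = ∑_{m=1}^k r_{m+1}⋯r_k ∑_{t=1}^{r_m−1} q^{t·r/r_m}`. -/
noncomputable def Kpoly (k : ℕ) (r : Fin k → ℕ) : Polynomial ℚ :=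
  ∑ m : Fin k, ((∏ j ∈ Finset.Ioi m, r j : ℕ) : Polynomial ℚ) *
    ∑ t ∈ Finset.Ico 1 (r m), X ^ (t * ∏ q ∈ Finset.univ.erase m, r q)

/-- The signed excedance generating function `∑_π q^{exc(π)} (−1)^{cyc(π)}`. -/
noncomputable def Pgen (k : ℕ) (r : Fin k → ℕ) [∀ j, NeZero (r j)] (n : ℕ) : Polynomial ℚ :=
  ∑ π : GElt k n r, (-1) ^ (cyc π.2) * X ^ (exc r π)

/-- The signed excedance generating function over derangements. -/
noncomputable def Qgen (k : ℕ) (r : Fin k → ℕ) [∀ j, NeZero (r j)] (n : ℕ) : Polynomial ℚ :=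
  ∑ π ∈ Finset.univ.filter (fun π : GElt k n r => ∀ i, π.2 i ≠ i),
    (-1) ^ (cyc π.2) * X ^ (exc r π)

/-- Wreath product multiplication `(Z,τ)·(U,σ) = ((z_i + u_{τ⁻¹(i)}), τ∘σ)`. -/
def wmul {k n : ℕ} {r : Fin k → ℕ} (p q : GElt k n r) : GElt k n r :=
  (fun i => p.1 i + q.1 (p.2⁻¹ i), p.2 * q.2)

/-- The identity of the wreath product. -/
def wone {k n : ℕ} {r : Fin k → ℕ} : GElt k n r := (fun _ => 0, 1)

/-- Number of absolute fixed points. -/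
def fixn {n : ℕ} (σ : Equiv.Perm (Fin n)) : ℕ :=
  (Finset.univ.filter fun i => σ i = i).card

/-- `ε`: the number of even `r_i`. -/
def epsn (k : ℕ) (r : Fin k → ℕ) : ℕ := (Finset.univ.filter fun i => 2 ∣ r i).card

/-- `f_n(u,v,w) = ∑_{π involution} u^{fix(π)} v^{exc_A(π)} w^{csum(π)}`,
with `u = X 0`, `v = X 1`, `w = X 2`. -/
noncomputable def fgen (k : ℕ) (r : Fin k → ℕ) [∀ j, NeZero (r j)] (n : ℕ) :
    MvPolynomial (Fin 3) ℚ :=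
  ∑ π ∈ Finset.univ.filter (fun π : GElt k n r => wmul π π = wone),
    (MvPolynomial.X 0) ^ (fixn π.2) * (MvPolynomial.X 1) ^ (excA r π) *
      (MvPolynomial.X 2) ^ (csum r π.1)

/-- `μ = 1` if `r` is odd, `μ = 1 + 2^ε w^{r/2}` if `r` is even. -/
noncomputable def muP (k : ℕ) (r : Fin k → ℕ) : MvPolynomial (Fin 3) ℚ :=
  if 2 ∣ totR k r then 1 + (2 ^ (epsn k r) : MvPolynomial (Fin 3) ℚ) *
    (MvPolynomial.X 2) ^ (totR k r / 2) else 1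

/-- The `r_max`-ary positional value of a color vector. -/
def Nval {k : ℕ} (r : Fin k → ℕ) (v : Color k r) : ℕ :=
  ∑ j : Fin k, (v j).val * (Finset.univ.sup r) ^ (k - 1 - (j : ℕ))

/-- The order `≺` on the colored alphabet `Σ`:
`i^v ≺ j^w` iff (`v ≠ w` and the value of `w` is less than that of `v`)
or (`v = w` and `i < j`). -/
def sigmaLt {k n : ℕ} (r : Fin k → ℕ) (x y : Fin n × Color k r) : Prop :=
  (x.2 ≠ y.2 ∧ Nval r y.2 < Nval r x.2) ∨ (x.2 = y.2 ∧ x.1 < y.1)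

instance {k n : ℕ} (r : Fin k → ℕ) : DecidableRel (sigmaLt (k := k) (n := n) r) :=
  fun _ _ => by unfold sigmaLt; infer_instance

/-- The total number of excedances of `π` acting on the colored alphabet:
`#{x ∈ Σ : π(x) ≻ x}`, where `π(i^v) = σ(i)^{v + z_i}`. -/
def excTot {k n : ℕ} (r : Fin k → ℕ) [∀ j, NeZero (r j)] (π : GElt k n r) : ℕ :=
  ((Finset.univ : Finset (Fin n × Color k r)).filter fun x =>
    sigmaLt r x (π.2 x.1, fun j => x.2 j + π.1 x.1 j)).card


section ExcTotHelpers

open Finset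

private lemma mygeom_lt (R : ℕ) (hR : 1 ≤ R) (c : ℕ → ℕ) (hc : ∀ m, c m ≤ R - 1) (e : ℕ) :
    ∑ m ∈ Finset.range e, c m * R ^ m < R ^ e := by
  induction e with
  | zero => simp
  | succ e ih =>
    rw [Finset.sum_range_succ]
    have h2 : c e * R ^ e ≤ (R - 1) * R ^ e := Nat.mul_le_mul_right _ (hc e)
    calc ∑ m ∈ Finset.range e, c m * R ^ m + c e * R ^ e
        < R ^ e + c e * R ^ e := by omega
      _ ≤ R ^ e + (R - 1) * R ^ e := by omega
      _ = ((R - 1) + 1) * R ^ e := by ring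
      _ = R ^ (e + 1) := by
          have : R - 1 + 1 = R := by omega
          rw [this, pow_succ, mul_comm]

private lemma pos_cmp {a b s t B : ℕ} (hs : s < B) (ht : t < B) (hab : a ≠ b) :
    a * B + s < b * B + t ↔ a < b := by
  constructor
  · intro h
    by_contra hba
    push_neg at hba
    have hba' : b < a := lt_of_le_of_ne hba (Ne.symm hab)
    have : b * B + t < a * B + s := by
      calc b * B + t < b * B + B := by omega
        _ = (b + 1) * B := by ring
        _ ≤ a * B := Nat.mul_le_mul_right _ hba'
        _ ≤ a * B + s := Nat.le_add_right _ _
    omega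
  · intro h
    calc a * B + s < a * B + B := by omega
      _ = (a + 1) * B := by ring
      _ ≤ b * B := Nat.mul_le_mul_right _ h
      _ ≤ b * B + t := Nat.le_add_right _ _

private lemma tail_lt {k : ℕ} (r : Fin k → ℕ) [∀ j, NeZero (r j)] (v : Color k r) (p : Fin k) :
    ∑ j ∈ Finset.Ioi p, (v j).val * (Finset.univ.sup r) ^ (k - 1 - (j : ℕ)) <
      (Finset.univ.sup r) ^ (k - 1 - (p : ℕ)) := by
  set R := Finset.univ.sup r with hRdef
  have hRr : ∀ j, r j ≤ R := fun j => Finset.le_sup (mem_univ j)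
  have hR1 : 1 ≤ R := le_trans (Nat.pos_of_ne_zero (NeZero.ne (r p))) (hRr p)
  calc ∑ j ∈ Finset.Ioi p, (v j).val * R ^ (k - 1 - (j : ℕ))
      ≤ ∑ j ∈ Finset.Ioi p, (R - 1) * R ^ (k - 1 - (j : ℕ)) := by
        refine Finset.sum_le_sum fun j _ => Nat.mul_le_mul_right _ ?_
        have h1 := ZMod.val_lt (v j)
        have h2 := hRr j
        omega
    _ = ∑ m ∈ Finset.range (k - 1 - (p : ℕ)), (R - 1) * R ^ m := by
        refine Finset.sum_nbij' (fun j => k - 1 - (j : ℕ))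
          (fun m => (⟨k - 1 - m, by have := p.isLt; omega⟩ : Fin k)) ?_ ?_ ?_ ?_ ?_
        · intro j hj
          simp only [Finset.mem_Ioi, Fin.lt_def] at hj
          have := j.isLt
          simp only [Finset.mem_range]
          omega
        · intro m hm
          simp only [Finset.mem_range] at hm
          simp only [Finset.mem_Ioi, Fin.lt_def]
          have := p.isLt
          omega
        · intro j hj
          simp only [Finset.mem_Ioi, Fin.lt_def] at hj
          have := j.isLt
          apply Fin.ext
          simp only []
          omega
        · intro m hm
          simp only [Finset.mem_range] at hm
          have := p.isLt
          simp only []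
          omega
        · intro j _; rfl
    _ < R ^ (k - 1 - (p : ℕ)) := mygeom_lt R hR1 _ (fun _ => le_refl _) _

private lemma nval_split {k : ℕ} (r : Fin k → ℕ) [∀ j, NeZero (r j)] (p : Fin k)
    (u : Color k r) :
    Nval r u = (∑ j ∈ Finset.Iio p, (u j).val * (Finset.univ.sup r) ^ (k - 1 - (j : ℕ)))
      + ((u p).val * (Finset.univ.sup r) ^ (k - 1 - (p : ℕ))
      + ∑ j ∈ Finset.Ioi p, (u j).val * (Finset.univ.sup r) ^ (k - 1 - (j : ℕ))) := by
  have huniv : (Finset.univ : Finset (Fin k)) = insert p (Finset.Iio p ∪ Finset.Ioi p) := by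
    ext x
    simp only [Finset.mem_univ, Finset.mem_insert, Finset.mem_union, Finset.mem_Iio,
      Finset.mem_Ioi, true_iff]
    rcases lt_trichotomy x p with h | h | h
    · exact Or.inr (Or.inl h)
    · exact Or.inl h
    · exact Or.inr (Or.inr h)
  have hnot : p ∉ Finset.Iio p ∪ Finset.Ioi p := by simp
  have hdisj : Disjoint (Finset.Iio p) (Finset.Ioi p) := by
    simp only [Finset.disjoint_left, Finset.mem_Iio, Finset.mem_Ioi]
    intro a h1 h2
    exact absurd (h1.trans h2) (lt_irrefl a)
  rw [Nval]
  set R := Finset.univ.sup r with hR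
  rw [huniv, Finset.sum_insert hnot, Finset.sum_union hdisj]
  ring

private lemma nval_lt_iff {k : ℕ} (r : Fin k → ℕ) [∀ j, NeZero (r j)] (v w : Color k r)
    (p : Fin k) (hag : ∀ j, j < p → w j = v j) (hne : (w p).val ≠ (v p).val) :
    Nval r w < Nval r v ↔ (w p).val < (v p).val := by
  rw [nval_split r p v, nval_split r p w]
  have hIio : ∑ j ∈ Finset.Iio p, (w j).val * (Finset.univ.sup r) ^ (k - 1 - (j : ℕ))
      = ∑ j ∈ Finset.Iio p, (v j).val * (Finset.univ.sup r) ^ (k - 1 - (j : ℕ)) :=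
    Finset.sum_congr rfl fun j hj => by rw [hag j (Finset.mem_Iio.mp hj)]
  rw [hIio, Nat.add_lt_add_iff_left]
  exact pos_cmp (tail_lt r w p) (tail_lt r v p) hne

private lemma zmod_count (m : ℕ) [NeZero m] (z : ZMod m) (hz : z ≠ 0) :
    (Finset.univ.filter fun a : ZMod m => (a + z).val < a.val).card = z.val := by
  have hm : 0 < m := Nat.pos_of_ne_zero (NeZero.ne m)
  have hzv : 0 < z.val := by
    rcases Nat.eq_zero_or_pos z.val with h | h
    · exact absurd ((ZMod.val_eq_zero z).mp h) hz
    · exact h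
  have hzlt : z.val < m := ZMod.val_lt z
  have key : ∀ a : ZMod m, ((a + z).val < a.val ↔ m ≤ a.val + z.val) := by
    intro a
    rw [ZMod.val_add]
    have ha := ZMod.val_lt a
    constructor
    · intro h
      by_contra hc
      push_neg at hc
      rw [Nat.mod_eq_of_lt hc] at h
      omega
    · intro h
      have h2 : a.val + z.val - m < m := by omega
      have h3 : (a.val + z.val) % m = a.val + z.val - m := by
        rw [Nat.mod_eq_sub_mod h, Nat.mod_eq_of_lt h2]
      omega
  rw [show (Finset.univ.filter fun a : ZMod m => (a + z).val < a.val)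
      = (Finset.univ.filter fun a : ZMod m => m ≤ a.val + z.val) from
    Finset.filter_congr fun a _ => by rw [key a]]
  have hcard : (Finset.univ.filter fun a : ZMod m => m ≤ a.val + z.val).card
      = (Finset.Ico (m - z.val) m).card := by
    apply Finset.card_nbij' (i := fun a => ZMod.val a) (j := fun x => (x : ZMod m))
    · intro a ha
      simp only [Finset.mem_coe, Finset.mem_filter, Finset.mem_univ, true_and] at ha
      simp only [Finset.mem_coe, Finset.mem_Ico]
      exact ⟨by omega, ZMod.val_lt a⟩
    · intro x hx
      simp only [Finset.mem_coe, Finset.mem_Ico] at hx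
      simp only [Finset.mem_coe, Finset.mem_filter, Finset.mem_univ, true_and]
      rw [ZMod.val_cast_of_lt hx.2]
      omega
    · intro a _
      exact ZMod.natCast_rightInverse a
    · intro x hx
      simp only [Finset.mem_coe, Finset.mem_Ico] at hx
      exact ZMod.val_cast_of_lt hx.2
  rw [hcard, Nat.card_Ico]
  omega

private lemma pi_sum {k : ℕ} (r : Fin k → ℕ) [∀ j, NeZero (r j)] (p : Fin k)
    (f : ZMod (r p) → ℕ) :
    ∑ v : Color k r, f (v p) = (∏ q ∈ Finset.univ.erase p, r q) * ∑ a, f a := by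
  have h1 : ∑ v : Color k r, f (v p)
      = ∑ x : ZMod (r p) × (∀ j : {j // j ≠ p}, ZMod (r (j : Fin k))), f x.1 :=
    Fintype.sum_equiv (Equiv.piSplitAt p (fun j => ZMod (r j)))
      (fun v => f (v p)) (fun x => f x.1) (fun v => rfl)
  rw [h1, Fintype.sum_prod_type]
  have h2 : ∀ a : ZMod (r p),
      (∑ _y : (∀ j : {j // j ≠ p}, ZMod (r (j : Fin k))), f a)
      = (∏ q ∈ Finset.univ.erase p, r q) * f a := by
    intro a
    rw [Finset.sum_const, Finset.card_univ, smul_eq_mul]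
    congr 1
    rw [Fintype.card_pi]
    have : ∀ j : {j // j ≠ p}, Fintype.card (ZMod (r (j : Fin k))) = r (j : Fin k) :=
      fun j => ZMod.card _
    rw [Finset.prod_congr rfl fun j _ => this j]
    exact (Finset.prod_subtype (p := fun j => j ≠ p) (Finset.univ.erase p)
      (fun x => by simp [Finset.mem_erase]) (fun q => r q)).symm
  rw [Finset.sum_congr rfl fun a _ => h2 a, ← Finset.mul_sum]

private lemma per_index {k n : ℕ} (r : Fin k → ℕ) [∀ j, NeZero (r j)] (z : Color k r)
    (a b : Fin n) :
    (∑ v : Color k r, if sigmaLt r (a, v) (b, fun j => v j + z j) then 1 else 0) =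
    (if (∀ j, (z j).val = 0) ∧ a < b then totR k r else 0) +
    ∑ p, (z p).val * (∏ t ∈ Finset.Iio p, if (z t).val = 0 then 1 else 0) *
      ∏ q ∈ Finset.univ.erase p, r q := by
  by_cases hz : ∀ j, z j = 0
  · have hval : ∀ j, (z j).val = 0 := fun j => by rw [hz j, ZMod.val_zero]
    have hvz : ∀ v : Color k r, (fun j => v j + z j) = v := fun v =>
      funext fun j => by rw [hz j, add_zero]
    have hsum2 : (∑ p, (z p).val * (∏ t ∈ Finset.Iio p, if (z t).val = 0 then 1 else 0) *
        ∏ q ∈ Finset.univ.erase p, r q) = 0 :=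
      Finset.sum_eq_zero fun p _ => by rw [hval p, zero_mul, zero_mul]
    rw [hsum2, add_zero]
    have hiff : ∀ v : Color k r,
        (if sigmaLt r (a, v) (b, fun j => v j + z j) then 1 else 0)
        = if a < b then 1 else 0 := by
      intro v
      rw [hvz v]
      have hs : sigmaLt r (a, v) (b, v) ↔ a < b := by
        unfold sigmaLt
        simp
      simp only [hs]
    rw [Finset.sum_congr rfl fun v _ => hiff v]
    by_cases hab : a < b
    · rw [if_pos (show (∀ j, (z j).val = 0) ∧ a < b from ⟨hval, hab⟩),
        Finset.sum_congr rfl fun (v : Color k r) _ => if_pos hab,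
        Finset.sum_const, Finset.card_univ, smul_eq_mul, mul_one, Fintype.card_pi, totR]
      exact Finset.prod_congr rfl fun j _ => ZMod.card _
    · rw [if_neg (show ¬((∀ j, (z j).val = 0) ∧ a < b) from fun hc => hab hc.2),
        Finset.sum_congr rfl fun (v : Color k r) _ => if_neg hab,
        Finset.sum_const]
      simp
  · push_neg at hz
    have hS : (Finset.univ.filter fun j => z j ≠ 0).Nonempty := by
      obtain ⟨j, hj⟩ := hz
      exact ⟨j, by simp [hj]⟩
    set p₀ := (Finset.univ.filter fun j => z j ≠ 0).min' hS with hp₀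
    have hz0 : z p₀ ≠ 0 := by
      have := Finset.min'_mem _ hS
      rw [Finset.mem_filter] at this
      exact this.2
    have hmin : ∀ j, j < p₀ → z j = 0 := by
      intro j hj
      by_contra hc
      have : p₀ ≤ j := Finset.min'_le _ j (by simp [hc])
      exact absurd hj (not_lt.mpr this)
    have hiff : ∀ v : Color k r,
        (if sigmaLt r (a, v) (b, fun j => v j + z j) then 1 else 0)
        = if (v p₀ + z p₀).val < (v p₀).val then 1 else 0 := by
      intro v
      congr 1
      have hwp : v p₀ + z p₀ ≠ v p₀ := fun h => hz0 (add_eq_left.mp h)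
      have hne : ((fun j => v j + z j) p₀).val ≠ (v p₀).val := by
        simp only []
        intro h
        exact hwp (ZMod.val_injective _ h)
      have hag : ∀ j, j < p₀ → (fun j => v j + z j) j = v j := by
        intro j hj
        simp only [hmin j hj, add_zero]
      have hvne : v ≠ fun j => v j + z j := fun h => hwp (congrFun h p₀).symm
      simp only [sigmaLt, eq_iff_iff]
      constructor
      · rintro (⟨_, h⟩ | ⟨h, _⟩)
        · exact (nval_lt_iff r v _ p₀ hag hne).mp h
        · exact absurd h hvne
      · intro h
        exact Or.inl ⟨hvne, (nval_lt_iff r v _ p₀ hag hne).mpr h⟩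
    rw [Finset.sum_congr rfl fun v _ => hiff v]
    have hlhs : (∑ v : Color k r, if (v p₀ + z p₀).val < (v p₀).val then 1 else 0)
        = (∏ q ∈ Finset.univ.erase p₀, r q) * (z p₀).val := by
      rw [pi_sum r p₀ (fun x => if (x + z p₀).val < x.val then 1 else 0)]
      congr 1
      rw [← zmod_count (r p₀) (z p₀) hz0, Finset.card_filter]
    rw [hlhs]
    have hfirst : ¬((∀ j, (z j).val = 0) ∧ a < b) := by
      rintro ⟨h, _⟩
      exact hz0 ((ZMod.val_eq_zero _).mp (h p₀))
    rw [if_neg hfirst, zero_add]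
    rw [Finset.sum_eq_single_of_mem p₀ (Finset.mem_univ _)]
    · have hprod : (∏ t ∈ Finset.Iio p₀, if (z t).val = 0 then 1 else 0) = 1 :=
        Finset.prod_eq_one fun t ht => by
          rw [if_pos (by rw [hmin t (Finset.mem_Iio.mp ht), ZMod.val_zero])]
      rw [hprod, mul_one, mul_comm]
    · intro p _ hp
      rcases lt_or_gt_of_ne hp with h | h
      · rw [show (z p).val = 0 by rw [hmin p h, ZMod.val_zero], zero_mul, zero_mul]
      · have : (∏ t ∈ Finset.Iio p, if (z t).val = 0 then 1 else 0) = 0 :=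
          Finset.prod_eq_zero (Finset.mem_Iio.mpr h)
            (by rw [if_neg (fun hc => hz0 ((ZMod.val_eq_zero _).mp hc))])
        rw [this, mul_zero, zero_mul]

end ExcTotHelpers

theorem excTot_eq (k n : ℕ) (r : Fin k → ℕ) [∀ j, NeZero (r j)]
    (hr : ∀ j, 1 ≤ r j) (π : GElt k n r) :
    excTot r π = totR k r * excA r π +
      ∑ p, csump r π.1 p * ∏ q ∈ Finset.univ.erase p, r q := by
  have hlhs : excTot r π = ∑ i : Fin n, ∑ v : Color k r,
      if sigmaLt r (i, v) (π.2 i, fun j => v j + π.1 i j) then 1 else 0 := by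
    rw [excTot, Finset.card_filter, Fintype.sum_prod_type]
  have hexc : totR k r * excA r π
      = ∑ i : Fin n, if (∀ j, (π.1 i j).val = 0) ∧ i < π.2 i then totR k r else 0 := by
    rw [excA, Finset.card_filter, Finset.mul_sum]
    exact Finset.sum_congr rfl fun i _ => by rw [mul_ite, mul_one, mul_zero]
  have hcs : (∑ p, csump r π.1 p * ∏ q ∈ Finset.univ.erase p, r q)
      = ∑ i : Fin n, ∑ p, (π.1 i p).val *
          (∏ t ∈ Finset.Iio p, if (π.1 i t).val = 0 then 1 else 0) *
          ∏ q ∈ Finset.univ.erase p, r q := by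
    rw [Finset.sum_comm]
    refine Finset.sum_congr rfl fun p _ => ?_
    rw [csump, Finset.sum_mul]
  rw [hlhs, hexc, hcs, ← Finset.sum_add_distrib]
  exact Finset.sum_congr rfl fun i _ => per_index r (π.1 i) i (π.2 i)
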